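/- Let d ≥ 1, λ > 0, and C > 0. Let T₁, …, T_K be nonempty finite disjoint index sets with total cardinality T = Σ_k |T_k|, and for each k and each t ∈ T_k let φ_{k,t} ∈ ℝ^d satisfy ‖φ_{k,t}‖₂ ≤ C. Define Λ₁ = λ I and Λ_{k+1} = Λ_k + Σ_{t ∈ T_k} φ_{k,t} φ_{k,t}ᵀ. Let E = { k ∈ {1,…,K} : there exists t ∈ T_k with φ_{k,t}ᵀ Λ_k^{−1} φ_{k,t} ≥ 1 }. Then |E| ≤ (d / log 2) · log( 1 + C² T / (λ d) ). -/

import Mathlib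

open Matrix Classical


variable {d : ℕ}

lemma aux_vmv_psd (v : Fin d → ℝ) : (vecMulVec v v).PosSemidef := by
  rw [vecMulVec_eq (ι := Unit)]
  have h := posSemidef_conjTranspose_mul_self (replicateRow Unit v)
  rwa [conjTranspose_replicateRow, star_trivial] at h

lemma aux_sum_psd {ι : Type*} (s : Finset ι) (v : ι → Fin d → ℝ) :
    (∑ t ∈ s, vecMulVec (v t) (v t)).PosSemidef := by
  classical
  induction s using Finset.induction with
  | empty => simpa using (Matrix.PosSemidef.zero (n := Fin d) (R := ℝ))
  | insert _ _ h ih => rw [Finset.sum_insert h]; exact (aux_vmv_psd _).add ih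

lemma aux_quad_nonneg {A : Matrix (Fin d) (Fin d) ℝ} (hA : A.PosSemidef) (v : Fin d → ℝ) :
    0 ≤ v ⬝ᵥ A *ᵥ v := by
  have h := hA.dotProduct_mulVec_nonneg v
  rwa [star_trivial] at h

lemma aux_det_add {A : Matrix (Fin d) (Fin d) ℝ} (hA : A.PosDef) (v : Fin d → ℝ) :
    (A + vecMulVec v v).det = A.det * (1 + v ⬝ᵥ A⁻¹ *ᵥ v) := by
  rw [vecMulVec_eq (ι := Unit), det_add_replicateCol_mul_replicateRow hA.det_pos.ne'.isUnit]
  congr 1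
  rw [det_unique]
  simp only [Matrix.add_apply, one_apply_eq, mul_apply, replicateRow_apply, replicateCol_apply, dotProduct, mulVec,
    Finset.univ_unique, Finset.sum_singleton, Finset.sum_mul, Finset.mul_sum]
  rw [Finset.sum_comm]; simp [mul_assoc]

lemma aux_det_le {ι : Type*} {A : Matrix (Fin d) (Fin d) ℝ} (hA : A.PosDef)
    (s : Finset ι) (v : ι → Fin d → ℝ) :
    A.det ≤ (A + ∑ t ∈ s, vecMulVec (v t) (v t)).det := by
  classical
  induction s using Finset.induction with
  | empty => simp
  | @insert a s ha ih =>
    have hB : (A + ∑ t ∈ s, vecMulVec (v t) (v t)).PosDef :=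
      hA.add_posSemidef (aux_sum_psd s v)
    calc A.det ≤ (A + ∑ t ∈ s, vecMulVec (v t) (v t)).det := ih
    _ ≤ _ := by
      rw [Finset.sum_insert ha, show A + (vecMulVec (v a) (v a) + ∑ t ∈ s, vecMulVec (v t) (v t))
            = (A + ∑ t ∈ s, vecMulVec (v t) (v t)) + vecMulVec (v a) (v a) by abel,
          aux_det_add hB]
      nth_rewrite 1 [← mul_one (A + ∑ t ∈ s, vecMulVec (v t) (v t)).det]
      have hq := aux_quad_nonneg hB.inv.posSemidef (v a)
      apply mul_le_mul_of_nonneg_left (by linarith) hB.det_pos.le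

lemma aux_det_two_le {ι : Type*} [DecidableEq ι] {A : Matrix (Fin d) (Fin d) ℝ} (hA : A.PosDef)
    (s : Finset ι) (v : ι → Fin d → ℝ) {t₀ : ι} (ht₀ : t₀ ∈ s)
    (h1 : 1 ≤ v t₀ ⬝ᵥ A⁻¹ *ᵥ v t₀) :
    2 * A.det ≤ (A + ∑ t ∈ s, vecMulVec (v t) (v t)).det := by
  have hsplit : ∑ t ∈ s, vecMulVec (v t) (v t)
      = vecMulVec (v t₀) (v t₀) + ∑ t ∈ s.erase t₀, vecMulVec (v t) (v t) :=
    (Finset.add_sum_erase s _ ht₀).symm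
  have hA' : (A + vecMulVec (v t₀) (v t₀)).PosDef := hA.add_posSemidef (aux_vmv_psd _)
  have h2 : 2 * A.det ≤ (A + vecMulVec (v t₀) (v t₀)).det := by
    rw [aux_det_add hA]
    nlinarith [hA.det_pos]
  calc 2 * A.det ≤ (A + vecMulVec (v t₀) (v t₀)).det := h2
  _ ≤ _ := by
    rw [hsplit, ← add_assoc]
    exact aux_det_le hA' _ v

lemma aux_trace_eq {A : Matrix (Fin d) (Fin d) ℝ} (hH : A.IsHermitian) :
    A.trace = ∑ i, hH.eigenvalues i := by
  nth_rewrite 1 [hH.spectral_theorem]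
  rw [Unitary.conjStarAlgAut_apply, trace_mul_cycle]
  have h1 : (star (hH.eigenvectorUnitary : Matrix (Fin d) (Fin d) ℝ)) *
      (hH.eigenvectorUnitary : Matrix (Fin d) (Fin d) ℝ) = 1 :=
    (Unitary.mem_iff.mp hH.eigenvectorUnitary.2).1
  rw [h1, one_mul, trace_diagonal]
  simp

lemma aux_det_le_pow {A : Matrix (Fin d) (Fin d) ℝ} (hd : 0 < d) (hA : A.PosSemidef) :
    A.det ≤ (A.trace / d) ^ d := by
  have hH := hA.1
  have hnn : ∀ i, 0 ≤ hH.eigenvalues i := hA.eigenvalues_nonneg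
  have hdet : A.det = ∏ i, hH.eigenvalues i := by
    rw [hH.det_eq_prod_eigenvalues]; norm_num
  have htr : A.trace = ∑ i, hH.eigenvalues i := aux_trace_eq hH
  have hdne : (d : ℝ) ≠ 0 := Nat.cast_ne_zero.mpr hd.ne'
  have hw : ∑ _i : Fin d, (d : ℝ)⁻¹ = 1 := by
    rw [Finset.sum_const, Finset.card_univ, Fintype.card_fin, nsmul_eq_mul,
      mul_inv_cancel₀ hdne]
  have key := Real.geom_mean_le_arith_mean_weighted Finset.univ (fun _ => (d : ℝ)⁻¹)
    hH.eigenvalues (fun _ _ => by positivity) hw (fun i _ => hnn i)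
  have hprod : ∏ i, hH.eigenvalues i ^ ((d : ℝ)⁻¹) = (∏ i, hH.eigenvalues i) ^ ((d : ℝ)⁻¹) :=
    Real.finset_prod_rpow _ _ (fun i _ => hnn i) _
  have hsum : ∑ i : Fin d, (d : ℝ)⁻¹ * hH.eigenvalues i = A.trace / d := by
    rw [htr, ← Finset.mul_sum]; ring
  rw [hprod, hsum] at key
  have h0 : (0:ℝ) ≤ ∏ i, hH.eigenvalues i := Finset.prod_nonneg (fun i _ => hnn i)
  calc A.det = ((∏ i, hH.eigenvalues i) ^ ((d : ℝ)⁻¹)) ^ d := by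
        rw [← Real.rpow_natCast ((∏ i, hH.eigenvalues i) ^ ((d : ℝ)⁻¹)) d,
          ← Real.rpow_mul h0, inv_mul_cancel₀ hdne, Real.rpow_one, hdet]
  _ ≤ (A.trace / d) ^ d := pow_le_pow_left₀ (Real.rpow_nonneg h0 _) key d

lemma aux_trace_vmv {C : ℝ} (v : Fin d → ℝ) (h : Real.sqrt (∑ i, v i ^ 2) ≤ C) :
    (vecMulVec v v).trace ≤ C ^ 2 := by
  have h1 : (vecMulVec v v).trace = ∑ i, v i ^ 2 := by
    simp [Matrix.trace, Matrix.diag, vecMulVec_apply, sq]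
  have h2 : ∑ i, v i ^ 2 = Real.sqrt (∑ i, v i ^ 2) ^ 2 :=
    (Real.sq_sqrt (by positivity)).symm
  rw [h1, h2]
  exact pow_le_pow_left₀ (Real.sqrt_nonneg _) h 2

/-- Bound on the number of "bad" epochs: with `Λ₁ = λI` (indexed here as `Λ 0`) and
`Λ_{k+1} = Λ_k + Σ_{t ∈ T_k} φ_{k,t} φ_{k,t}ᵀ`, feature vectors of Euclidean norm at most `C`,
and `T = Σ_k |T_k|`, the set `E` of epochs containing a feature with
`‖φ_{k,t}‖²_{Λ_k⁻¹} ≥ 1` satisfies `|E| ≤ (d/log 2) log(1 + C² T/(λ d))`. -/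
theorem stmt_11 {ι : Type*} [DecidableEq ι] (d K : ℕ) (hd : 1 ≤ d)
    (lam C : ℝ) (hlam : 0 < lam) (hC : 0 < C)
    (Ts : Fin K → Finset ι) (hne : ∀ k, (Ts k).Nonempty)
    (hdisj : ∀ k k', k ≠ k' → Disjoint (Ts k) (Ts k'))
    (φ : Fin K → ι → (Fin d → ℝ))
    (hφ : ∀ k, ∀ t ∈ Ts k, Real.sqrt (∑ i, (φ k t i) ^ 2) ≤ C)
    (Λ : ℕ → Matrix (Fin d) (Fin d) ℝ)
    (hΛ0 : Λ 0 = lam • (1 : Matrix (Fin d) (Fin d) ℝ))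
    (hΛ : ∀ k : Fin K, Λ (k + 1) = Λ k + ∑ t ∈ Ts k, vecMulVec (φ k t) (φ k t))
    (T : ℕ) (hT : T = ∑ k, (Ts k).card) :
    (((Finset.univ.filter fun k : Fin K =>
          ∃ t ∈ Ts k, 1 ≤ φ k t ⬝ᵥ (Λ k)⁻¹.mulVec (φ k t)).card : ℕ) : ℝ)
      ≤ ((d : ℝ) / Real.log 2) * Real.log (1 + C ^ 2 * (T : ℝ) / (lam * (d : ℝ))) := by
  classical
  set E := Finset.univ.filter (fun k : Fin K =>
      ∃ t ∈ Ts k, 1 ≤ φ k t ⬝ᵥ (Λ k)⁻¹.mulVec (φ k t)) with hE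
  have hd0 : 0 < d := hd
  have hdR : (0:ℝ) < d := by exact_mod_cast hd0
  have main : ∀ n, n ≤ K → (Λ n).PosDef ∧
      (Λ n).trace ≤ lam * d + C ^ 2 *
        ∑ k ∈ Finset.univ.filter (fun k : Fin K => (k : ℕ) < n), ((Ts k).card : ℝ) ∧
      2 ^ ((E.filter (fun k' : Fin K => (k' : ℕ) < n)).card) * lam ^ d ≤ (Λ n).det := by
    intro n
    induction n with
    | zero =>
      intro _
      have hdiag : Λ 0 = diagonal (fun _ : Fin d => lam) := by
        rw [hΛ0]
        ext i j
        by_cases h : i = j <;> simp [h, Matrix.one_apply, Matrix.diagonal]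
      have hpd : (Λ 0).PosDef := by
        rw [hdiag]; exact Matrix.PosDef.diagonal fun _ => hlam
      refine ⟨hpd, ?_, ?_⟩
      · have h1 : (Λ 0).trace = lam * d := by
          rw [hdiag, trace_diagonal]; simp [mul_comm]
        have h2 : (Finset.univ.filter (fun k : Fin K => (k : ℕ) < 0)) = ∅ := by
          ext k; simp
        rw [h1, h2]; simp
      · have h1 : (Λ 0).det = lam ^ d := by
          rw [hΛ0, det_smul, det_one]; simp
        have h2 : (E.filter (fun k' : Fin K => (k' : ℕ) < 0)) = ∅ := by ext k; simp
        rw [h1, h2]; simp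
    | succ n ih =>
      intro hn
      obtain ⟨hpd, htr, hdet⟩ := ih (Nat.le_of_succ_le hn)
      have hnK : n < K := hn
      set k : Fin K := ⟨n, hnK⟩ with hk
      have hrec : Λ (n + 1) = Λ n + ∑ t ∈ Ts k, vecMulVec (φ k t) (φ k t) := hΛ k
      have hpd' : (Λ (n + 1)).PosDef := by
        rw [hrec]; exact hpd.add_posSemidef (aux_sum_psd _ _)
      have step_filter : ∀ s : Finset (Fin K),
          s.filter (fun k' : Fin K => (k' : ℕ) < n + 1) =
            if k ∈ s then insert k (s.filter fun k' : Fin K => (k' : ℕ) < n)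
            else s.filter (fun k' : Fin K => (k' : ℕ) < n) := by
        intro s
        split_ifs with hks
        · ext k'
          simp only [Finset.mem_filter, Finset.mem_insert]
          constructor
          · rintro ⟨h1, h2⟩
            rcases Nat.lt_succ_iff_lt_or_eq.mp h2 with h | h
            · exact Or.inr ⟨h1, h⟩
            · exact Or.inl (Fin.ext h)
          · rintro (rfl | ⟨h1, h2⟩)
            · exact ⟨hks, Nat.lt_succ_self n⟩
            · exact ⟨h1, Nat.lt_succ_of_lt h2⟩
        · ext k'
          simp only [Finset.mem_filter]
          constructor
          · rintro ⟨h1, h2⟩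
            refine ⟨h1, ?_⟩
            rcases Nat.lt_succ_iff_lt_or_eq.mp h2 with h | h
            · exact h
            · have hkk : k' = k := Fin.ext h
              exact absurd (hkk ▸ h1) hks
          · rintro ⟨h1, h2⟩; exact ⟨h1, Nat.lt_succ_of_lt h2⟩
      have hknot : ∀ s : Finset (Fin K), k ∉ s.filter (fun k' : Fin K => (k' : ℕ) < n) := by
        intro s hmem
        rw [Finset.mem_filter] at hmem
        exact Nat.lt_irrefl n hmem.2
      refine ⟨hpd', ?_, ?_⟩
      · -- trace bound
        have htrS : (∑ t ∈ Ts k, vecMulVec (φ k t) (φ k t)).trace ≤ (Ts k).card * C ^ 2 := by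
          rw [trace_sum]
          calc ∑ t ∈ Ts k, (vecMulVec (φ k t) (φ k t)).trace
              ≤ ∑ _t ∈ Ts k, C ^ 2 :=
                Finset.sum_le_sum fun t ht => aux_trace_vmv _ (hφ k t ht)
          _ = (Ts k).card * C ^ 2 := by rw [Finset.sum_const, nsmul_eq_mul]
        have hsum : ∑ k' ∈ Finset.univ.filter (fun k' : Fin K => (k' : ℕ) < n + 1),
            ((Ts k').card : ℝ)
            = (∑ k' ∈ Finset.univ.filter (fun k' : Fin K => (k' : ℕ) < n), ((Ts k').card : ℝ))
              + (Ts k).card := by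
          rw [step_filter Finset.univ, if_pos (Finset.mem_univ k),
            Finset.sum_insert (hknot Finset.univ), add_comm]
        rw [hrec, trace_add, hsum]
        have := htr
        nlinarith [htrS]
      · -- det bound
        by_cases hkE : k ∈ E
        · have hkE' := hkE
          rw [hE, Finset.mem_filter] at hkE'
          obtain ⟨-, t₀, ht₀, h1⟩ := hkE'
          have hstep : 2 * (Λ n).det ≤ (Λ (n + 1)).det := by
            rw [hrec]
            exact aux_det_two_le hpd (Ts k) (φ k) ht₀ h1
          have hcard : ((E.filter (fun k' : Fin K => (k' : ℕ) < n + 1)).card)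
              = (E.filter (fun k' : Fin K => (k' : ℕ) < n)).card + 1 := by
            rw [step_filter E, if_pos hkE, Finset.card_insert_of_notMem (hknot E)]
          rw [hcard, pow_succ]
          nlinarith [pow_pos hlam d, pow_pos (by norm_num : (0:ℝ) < 2)
            ((E.filter (fun k' : Fin K => (k' : ℕ) < n)).card)]
        · have hstep : (Λ n).det ≤ (Λ (n + 1)).det := by
            rw [hrec]; exact aux_det_le hpd (Ts k) (φ k)
          have hcard : (E.filter (fun k' : Fin K => (k' : ℕ) < n + 1))
              = E.filter (fun k' : Fin K => (k' : ℕ) < n) := by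
            rw [step_filter E, if_neg hkE]
          rw [hcard]
          linarith
  obtain ⟨hpdK, htrK, hdetK⟩ := main K le_rfl
  have huniv : Finset.univ.filter (fun k : Fin K => (k : ℕ) < K) = Finset.univ := by
    ext k; simp [k.is_lt]
  have hEfull : E.filter (fun k' : Fin K => (k' : ℕ) < K) = E := by
    apply Finset.filter_true_of_mem
    intro k _; exact k.is_lt
  rw [huniv] at htrK
  rw [hEfull] at hdetK
  have hTR : (∑ k' : Fin K, ((Ts k').card : ℝ)) = (T : ℝ) := by
    rw [hT]; push_cast; rfl
  rw [hTR] at htrK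
  set m := E.card with hm
  set x := C ^ 2 * (T : ℝ) / (lam * (d : ℝ)) with hx
  have hx0 : 0 ≤ x := by positivity
  have htrnn : 0 ≤ (Λ K).trace := by
    rw [aux_trace_eq hpdK.isHermitian]
    exact Finset.sum_nonneg fun i _ => hpdK.posSemidef.eigenvalues_nonneg i
  have heq : (lam * d + C ^ 2 * (T : ℝ)) / d = lam * (1 + x) := by
    rw [hx]; field_simp
  have hchain : (2:ℝ) ^ m * lam ^ d ≤ lam ^ d * (1 + x) ^ d := by
    calc (2:ℝ) ^ m * lam ^ d ≤ (Λ K).det := hdetK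
    _ ≤ ((Λ K).trace / d) ^ d := aux_det_le_pow hd0 hpdK.posSemidef
    _ ≤ ((lam * d + C ^ 2 * (T : ℝ)) / d) ^ d := by
        apply pow_le_pow_left₀ (div_nonneg htrnn hdR.le)
        exact div_le_div_of_nonneg_right htrK hdR.le
    _ = (lam * (1 + x)) ^ d := by rw [heq]
    _ = lam ^ d * (1 + x) ^ d := mul_pow _ _ _
  have hlp : (0:ℝ) < lam ^ d := pow_pos hlam d
  have hfin : (2:ℝ) ^ m ≤ (1 + x) ^ d := by
    have h := hchain
    rw [mul_comm (lam ^ d) ((1 + x) ^ d)] at h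
    exact le_of_mul_le_mul_right h hlp
  have hlog2 : 0 < Real.log 2 := Real.log_pos one_lt_two
  have h1x : (0:ℝ) < 1 + x := by linarith
  have hmlog : (m : ℝ) * Real.log 2 ≤ (d : ℝ) * Real.log (1 + x) := by
    calc (m : ℝ) * Real.log 2 = Real.log ((2:ℝ) ^ m) := by rw [Real.log_pow]
    _ ≤ Real.log ((1 + x) ^ d) := Real.log_le_log (by positivity) hfin
    _ = (d : ℝ) * Real.log (1 + x) := by rw [Real.log_pow]
  rw [div_mul_eq_mul_div, le_div_iff₀ hlog2]
  exact hmlog
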